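/- Let k be a commutative ring, A a k-algebra, e an idempotent of A, and Λ := eAe. Then every idealized extension R of A by the A-A-bimodule X := Ae ⊗_Λ eA is equal (as an idealized extension) to the mirror-reflective algebra R(A,e,z) for some z ∈ Z(Λ); that is, the multiplication of R restricted to X ⊗_A X → X coincides with ω_z for some z ∈ Z(Λ). -/

import Mathlib

/-!
Common setup: bimodules over a ring `A`, a universal-property description of the
`A`-`A`-bimodule `Ae ⊗_{eAe} eA` (with distinguished element `u = e ⊗ e`),
a universal-property description of tensor products of bimodules over `A`,
and the center of the corner ring `eAe`.
-/

open MulOpposite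

universe u

namespace Paper

/-- A bundled `A`-`A`-bimodule, encoded via commuting left `A`- and left `Aᵐᵒᵖ`-actions. -/
structure Bimod (A : Type u) [Ring A] : Type (u + 1) where
  carrier : Type u
  [addCommGroup : AddCommGroup carrier]
  [modLeft : Module A carrier]
  [modRight : Module Aᵐᵒᵖ carrier]
  [smulComm : SMulCommClass A Aᵐᵒᵖ carrier]

attribute [instance] Bimod.addCommGroup Bimod.modLeft Bimod.modRight Bimod.smulComm

/-- A homomorphism of `A`-`A`-bimodules. -/
def IsBimodHom (A : Type u) [Ring A] {X Y : Type u} [AddCommGroup X] [AddCommGroup Y]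
    [Module A X] [Module Aᵐᵒᵖ X] [Module A Y] [Module Aᵐᵒᵖ Y] (g : X → Y) : Prop :=
  (∀ x y : X, g (x + y) = g x + g y) ∧ (∀ (a : A) (x : X), g (a • x) = a • g x) ∧
    (∀ (a : Aᵐᵒᵖ) (x : X), g (a • x) = a • g x)

variable (A : Type u) [Ring A]

/-- `(X, u)` is a model for the `A`-`A`-bimodule `Ae ⊗_{eAe} eA`, where `u` plays the
role of `e ⊗ e`.  This is expressed by the universal property: bimodule maps out of `X`
correspond exactly to elements `v` of the target with `v = e v e` and
`λ • v = v • λ` for all `λ ∈ eAe`. -/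
structure IsAeTensor (e : A) (X : Type u) [AddCommGroup X]
    [Module A X] [Module Aᵐᵒᵖ X] [SMulCommClass A Aᵐᵒᵖ X] (u : X) : Prop where
  smul_e : e • u = u
  op_smul_e : op e • u = u
  balance : ∀ a : A, (e * a * e) • u = op (e * a * e) • u
  universal : ∀ (Y : Bimod.{u} A) (v : Y.carrier), e • v = v → op e • v = v →
    (∀ a : A, (e * a * e) • v = op (e * a * e) • v) →
      ∃! g : X → Y.carrier, IsBimodHom A g ∧ g u = v

/-- The element `ae ⊗ eb` of (a model `(X, u)` of) `Ae ⊗_{eAe} eA`. -/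
def tmk (e : A) {X : Type u} [AddCommGroup X] [Module A X] [Module Aᵐᵒᵖ X]
    (u : X) (a b : A) : X :=
  (a * e) • (op (e * b) • u)

/-- `t : X → Y → Z` is biadditive, `A`-balanced and bilinear over the outer
`A`-`A`-bimodule structures. -/
def IsBalancedBiadd {X Y Z : Type u} [AddCommGroup X] [AddCommGroup Y] [AddCommGroup Z]
    [Module A X] [Module Aᵐᵒᵖ X] [Module A Y] [Module Aᵐᵒᵖ Y] [Module A Z] [Module Aᵐᵒᵖ Z]
    (t : X → Y → Z) : Prop :=
  (∀ x x' y, t (x + x') y = t x y + t x' y) ∧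
  (∀ x y y', t x (y + y') = t x y + t x y') ∧
  (∀ (a : A) x y, t (op a • x) y = t x (a • y)) ∧
  (∀ (a : A) x y, t (a • x) y = a • t x y) ∧
  (∀ (a : A) x y, t x (op a • y) = op a • t x y)

/-- `t : X → Y → T` is a model for the tensor product `X ⊗_A Y` of `A`-`A`-bimodules. -/
structure IsTensorOverA {X Y T : Type u} [AddCommGroup X] [AddCommGroup Y] [AddCommGroup T]
    [Module A X] [Module Aᵐᵒᵖ X] [Module A Y] [Module Aᵐᵒᵖ Y] [Module A T] [Module Aᵐᵒᵖ T]
    [SMulCommClass A Aᵐᵒᵖ T] (t : X → Y → T) : Prop where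
  balanced : IsBalancedBiadd A t
  universal : ∀ (Z : Bimod.{u} A) (s : X → Y → Z.carrier), IsBalancedBiadd A s →
    ∃! g : T → Z.carrier, IsBimodHom A g ∧ ∀ x y, g (t x y) = s x y

/-- The center `Z(eAe)` of the corner ring `eAe`, as a subset of `A`. -/
def centerCorner (e : A) : Set A :=
  {z | z = e * z * e ∧ ∀ a : A, z * (e * a * e) = (e * a * e) * z}

end Paper

namespace Paper

open MulOpposite

/-- Every idealized extension `R` of `A` by the `A`-`A`-bimodule
`X = Ae ⊗_{eAe} eA` is the mirror-reflective algebra `R(A, e, z)` for some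
`z ∈ Z(eAe)`: the multiplication of `R` restricted to `X` coincides with `ω_z`. -/
theorem idealized_extension_is_mirror_reflective
    (k : Type u) [CommRing k] (A : Type u) [Ring A] [Algebra k A]
    (e : A) (he : IsIdempotentElem e)
    (X : Type u) [AddCommGroup X] [Module A X] [Module Aᵐᵒᵖ X] [SMulCommClass A Aᵐᵒᵖ X]
    (u : X) (hX : IsAeTensor A e X u)
    -- `R` is an idealized extension of `A` by `X`:
    (R : Type u) [Ring R] [Algebra k R]
    (ι : A →ₐ[k] R) (j : X →+ R)
    (hbij : Function.Bijective (fun p : A × X => ι p.1 + j p.2))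
    (hleft : ∀ (a : A) (x : X), ι a * j x = j (a • x))
    (hright : ∀ (a : A) (x : X), j x * ι a = j (op a • x))
    (hideal : ∀ x y : X, ∃ z : X, j x * j y = j z) :
    ∃ z ∈ centerCorner A e, ∀ b c b' c' : A,
      j (tmk A e u b c) * j (tmk A e u b' c') =
        j (tmk A e u (b * e * c * b') (z * c')) := by
  classical
  -- `j` is injective
  have hinj : Function.Injective j := by
    intro x y hxy
    have h := hbij.1 (a₁ := ((0 : A), x)) (a₂ := ((0 : A), y)) (by simp [hxy])
    exact congrArg Prod.snd h
  -- the square of `j u`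
  obtain ⟨w, hw⟩ := hideal u u
  have hew : e • w = w := by
    apply hinj
    calc j (e • w) = ι e * (j u * j u) := by rw [← hleft, hw]
    _ = (ι e * j u) * j u := by rw [mul_assoc]
    _ = j (e • u) * j u := by rw [hleft]
    _ = j u * j u := by rw [hX.smul_e]
    _ = j w := hw
  have hoew : op e • w = w := by
    apply hinj
    calc j (op e • w) = (j u * j u) * ι e := by rw [← hright, hw]
    _ = j u * (j u * ι e) := by rw [mul_assoc]
    _ = j u * j (op e • u) := by rw [hright]
    _ = j u * j u := by rw [hX.op_smul_e]
    _ = j w := hw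
  have hbw : ∀ a : A, (e * a * e) • w = op (e * a * e) • w := by
    intro a
    apply hinj
    calc j ((e * a * e) • w) = ι (e*a*e) * (j u * j u) := by rw [← hleft, hw]
    _ = (ι (e*a*e) * j u) * j u := (mul_assoc (ι (e*a*e)) (j u) (j u)).symm
    _ = j ((e*a*e) • u) * j u := by rw [hleft]
    _ = j (op (e*a*e) • u) * j u := by rw [hX.balance]
    _ = (j u * ι (e*a*e)) * j u := by rw [hright]
    _ = j u * (ι (e*a*e) * j u) := mul_assoc (j u) (ι (e*a*e)) (j u)
    _ = j u * j ((e*a*e) • u) := by rw [hleft]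
    _ = j u * j (op (e*a*e) • u) := by rw [hX.balance]
    _ = j u * (j u * ι (e*a*e)) := by rw [hright]
    _ = (j u * j u) * ι (e*a*e) := (mul_assoc (j u) (j u) (ι (e*a*e))).symm
    _ = j w * ι (e*a*e) := by rw [hw]
    _ = j (op (e*a*e) • w) := by rw [hright]
  have hee : ∀ x : A, e * (e * x) = e * x := fun x => by rw [← mul_assoc, he]
  -- the multiplication map `μ : X → A`
  obtain ⟨μ, ⟨⟨μadd, μl, μr⟩, μu⟩, -⟩ :=
    hX.universal (Bimod.mk A) e
      (by rw [smul_eq_mul]; exact he)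
      (by rw [op_smul_eq_mul]; exact he)
      (fun a => by rw [smul_eq_mul, op_smul_eq_mul]; simp [mul_assoc, hee, he.eq])
  have μl' : ∀ (a : A) (x : X), μ (a • x) = a * μ x := fun a x => by
    rw [μl a x, smul_eq_mul]
  have μr' : ∀ (a : A) (x : X), μ (op a • x) = μ x * a := fun a x => by
    rw [μr (op a) x, op_smul_eq_mul]
  have hez : e * μ w = μ w := by rw [← μl' e w, hew]
  have hze : μ w * e = μ w := by rw [← μr' e w, hoew]
  have hz1 : μ w = e * μ w * e := by rw [hez, hze]
  have hzc : ∀ a : A, μ w * (e * a * e) = (e * a * e) * μ w := fun a => by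
    rw [← μr' (e*a*e) w, ← hbw a, μl']
  -- `X` is generated by `u` as a bimodule
  set T : Set X := {x | ∃ a b : A, x = a • (op b • u)} with hT
  have hTmem : ∀ a b : A, a • (op b • u) ∈ AddSubgroup.closure T :=
    fun a b => AddSubgroup.subset_closure ⟨a, b, rfl⟩
  have hTs : ∀ (a : A) (x : X), x ∈ AddSubgroup.closure T →
      a • x ∈ AddSubgroup.closure T := by
    intro a x hx
    induction hx using AddSubgroup.closure_induction with
    | mem y hy => obtain ⟨a', b', rfl⟩ := hy; rw [← mul_smul]; exact hTmem _ _
    | zero => rw [smul_zero]; exact (AddSubgroup.closure T).zero_mem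
    | add y y' _ _ h h' => rw [smul_add]; exact (AddSubgroup.closure T).add_mem h h'
    | neg y _ h => rw [smul_neg]; exact (AddSubgroup.closure T).neg_mem h
  have hTop : ∀ (m : Aᵐᵒᵖ) (x : X), x ∈ AddSubgroup.closure T →
      m • x ∈ AddSubgroup.closure T := by
    intro m x hx
    induction hx using AddSubgroup.closure_induction with
    | mem y hy =>
        obtain ⟨a', b', rfl⟩ := hy
        rw [← smul_comm a' m (op b' • u), ← mul_smul, ← op_unop m, ← op_mul]
        exact hTmem _ _
    | zero => rw [smul_zero]; exact (AddSubgroup.closure T).zero_mem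
    | add y y' _ _ h h' => rw [smul_add]; exact (AddSubgroup.closure T).add_mem h h'
    | neg y _ h => rw [smul_neg]; exact (AddSubgroup.closure T).neg_mem h
  set S : Submodule A X :=
    { carrier := (AddSubgroup.closure T : AddSubgroup X)
      add_mem' := fun hx hy => (AddSubgroup.closure T).add_mem hx hy
      zero_mem' := (AddSubgroup.closure T).zero_mem
      smul_mem' := fun a x hx => hTs a x hx } with hS
  let lop : Aᵐᵒᵖ → (X →ₗ[A] X) := fun m =>
    { toFun := fun x => m • x
      map_add' := fun x y => smul_add m x y
      map_smul' := fun a x => (smul_comm a m x).symm }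
  letI instSMulOp : SMul Aᵐᵒᵖ (X ⧸ S) :=
    ⟨fun m => Submodule.mapQ S S (lop m) (fun x hx => hTop m x hx)⟩
  have key : ∀ (m : Aᵐᵒᵖ) (x : X),
      m • (Submodule.Quotient.mk x : X ⧸ S) = Submodule.Quotient.mk (m • x) :=
    fun m x => by exact Submodule.mapQ_apply S S (lop m) x
  letI instMod : Module Aᵐᵒᵖ (X ⧸ S) :=
    { one_smul := fun q => by
        obtain ⟨x, rfl⟩ := Submodule.Quotient.mk_surjective S q
        rw [key, one_smul]
      mul_smul := fun m n q => by
        obtain ⟨x, rfl⟩ := Submodule.Quotient.mk_surjective S q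
        rw [key, key, key, mul_smul]
      smul_zero := fun m => by
        rw [show (0 : X ⧸ S) = Submodule.Quotient.mk 0 from (Submodule.Quotient.mk_eq_zero S).2 S.zero_mem |>.symm,
          key, smul_zero]
      smul_add := fun m q r => by
        obtain ⟨x, rfl⟩ := Submodule.Quotient.mk_surjective S q
        obtain ⟨y, rfl⟩ := Submodule.Quotient.mk_surjective S r
        rw [key m x, key m y, ← Submodule.Quotient.mk_add,
          ← Submodule.Quotient.mk_add, key m (x + y), smul_add]
      add_smul := fun m n q => by
        obtain ⟨x, rfl⟩ := Submodule.Quotient.mk_surjective S q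
        rw [key (m + n) x, key m x, key n x, ← Submodule.Quotient.mk_add, add_smul]
      zero_smul := fun q => by
        obtain ⟨x, rfl⟩ := Submodule.Quotient.mk_surjective S q
        rw [key 0 x, zero_smul]
        exact (Submodule.Quotient.mk_eq_zero S).2 S.zero_mem }
  letI instSCC : SMulCommClass A Aᵐᵒᵖ (X ⧸ S) :=
    ⟨fun a m q => by
      obtain ⟨x, rfl⟩ := Submodule.Quotient.mk_surjective S q
      rw [key, ← Submodule.Quotient.mk_smul, ← Submodule.Quotient.mk_smul, key,
        smul_comm]⟩
  have hmku : (Submodule.Quotient.mk u : X ⧸ S) = 0 := by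
    rw [Submodule.Quotient.mk_eq_zero]
    exact AddSubgroup.subset_closure ⟨1, 1, by simp⟩
  have hgen : ∀ x : X, x ∈ AddSubgroup.closure T := by
    obtain ⟨g, -, hguniq⟩ :=
      hX.universal (Bimod.mk (X ⧸ S)) 0 (smul_zero e) (smul_zero (op e))
        (fun a => by rw [smul_zero, smul_zero])
    have h1 : (fun x : X => (Submodule.Quotient.mk x : X ⧸ S)) = g :=
      hguniq _ ⟨⟨fun x y => Submodule.Quotient.mk_add S,
        fun a x => Submodule.Quotient.mk_smul S a x,
        fun m x => (key m x).symm⟩, hmku⟩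
    have h2 : (fun _ : X => (0 : X ⧸ S)) = g :=
      hguniq _ ⟨⟨fun x y => (add_zero 0).symm,
        fun a x => (smul_zero a).symm,
        fun m x => (smul_zero m).symm⟩, rfl⟩
    intro x
    have hx0 : (Submodule.Quotient.mk x : X ⧸ S) = 0 := by
      rw [congrFun h1 x, ← congrFun h2 x]
    exact (Submodule.Quotient.mk_eq_zero S).1 hx0
  -- every "corner" element of `X` is `op z' • u`
  have hopmul : ∀ (a b : A) (x : X), op a • op b • x = op (b * a) • x :=
    fun a b x => by rw [← mul_smul, ← op_mul]
  have hpure : ∀ x : X, x ∈ AddSubgroup.closure T →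
      ∃ z' : A, e • (op e • x) = op (e * z' * e) • u := by
    intro x hx
    induction hx using AddSubgroup.closure_induction with
    | mem y hy =>
        obtain ⟨a, b, rfl⟩ := hy
        refine ⟨a * e * b, ?_⟩
        calc e • op e • (a • (op b • u))
            = e • (a • (op e • op b • u)) := by rw [← smul_comm a (op e)]
          _ = (e * a) • (op (b * e) • u) := by rw [smul_smul, hopmul]
          _ = (e * a) • (op (b * e) • (op e • u)) := by rw [hX.op_smul_e]
          _ = (e * a) • (op (e * (b * e)) • u) := by rw [hopmul]
          _ = (e * a) • (op (e * b * e) • u) := by rw [mul_assoc]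
          _ = (e * a) • (op (e * b * e) • (e • u)) := by rw [hX.smul_e]
          _ = (e * a) • (e • (op (e * b * e) • u)) := by rw [smul_comm e (op (e*b*e))]
          _ = (e * a * e) • (op (e * b * e) • u) := by rw [smul_smul]
          _ = op (e * b * e) • ((e * a * e) • u) := by rw [smul_comm]
          _ = op (e * b * e) • (op (e * a * e) • u) := by rw [hX.balance]
          _ = op ((e * a * e) * (e * b * e)) • u := by rw [hopmul]
          _ = op (e * (a * e * b) * e) • u := by
              congr 2
              simp [mul_assoc, hee]
    | zero => exact ⟨0, by simp⟩
    | add y y' _ _ h h' =>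
        obtain ⟨z₁, h₁⟩ := h
        obtain ⟨z₂, h₂⟩ := h'
        refine ⟨z₁ + z₂, ?_⟩
        rw [smul_add, smul_add, h₁, h₂, ← add_smul, ← op_add,
          show e*z₁*e + e*z₂*e = e*(z₁+z₂)*e by rw [mul_add, add_mul]]
    | neg y _ h =>
        obtain ⟨z₁, h₁⟩ := h
        refine ⟨-z₁, ?_⟩
        rw [smul_neg, smul_neg, h₁, ← neg_smul, ← op_neg,
          show -(e*z₁*e) = e*(-z₁)*e by simp]
  obtain ⟨z', hz'⟩ := hpure w (hgen w)
  have h1 : w = op (e * z' * e) • u := by rw [← hz', hoew, hew]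
  have h2 : μ w = e * z' * e := by
    conv_lhs => rw [h1]
    rw [μr', μu]
    simp [mul_assoc, hee]
  have hwz : w = op (μ w) • u := by rw [h2, ← h1]
  -- conclusion
  refine ⟨μ w, ⟨hz1, hzc⟩, ?_⟩
  intro b c b' c'
  have hswap : ∀ m : A, ι (e * m * e) * j u = j u * ι (e * m * e) := fun m => by
    rw [hleft, hX.balance, ← hright]
  have hjw : j u * j u = j u * ι (μ w) := by
    rw [hw]
    conv_lhs => rw [hwz]
    exact (hright _ _).symm
  have f1 : (e * c) * (b' * e) = e * (c * b') * e := by simp [mul_assoc]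
  have f2 : (b * e * c * b') * e = (b * e) * (e * (c * b') * e) := by
    simp [mul_assoc, hee]
  have f3 : μ w * (e * (c * b') * e) = (e * (c * b') * e) * μ w := hzc (c * b')
  have f4 : μ w * (e * c') = e * (μ w * c') := by
    rw [← mul_assoc, hze, ← mul_assoc, hez]
  show j ((b * e) • (op (e * c) • u)) * j ((b' * e) • (op (e * c') • u))
      = j (((b * e * c * b') * e) • (op (e * (μ w * c')) • u))
  rw [← hleft, ← hleft, ← hleft, ← hright, ← hright, ← hright]
  calc ι (b*e) * (j u * ι (e*c)) * (ι (b'*e) * (j u * ι (e*c')))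
      = ι (b*e) * (j u * (ι (e*c) * (ι (b'*e) * (j u * ι (e*c'))))) := by
        simp only [mul_assoc]
    _ = ι (b*e) * (j u * ((ι (e*c) * ι (b'*e)) * (j u * ι (e*c')))) := by
        rw [mul_assoc (ι (e*c)) (ι (b'*e))]
    _ = ι (b*e) * (j u * (ι (e*(c*b')*e) * (j u * ι (e*c')))) := by
        rw [← map_mul, f1]
    _ = ι (b*e) * ((j u * ι (e*(c*b')*e)) * (j u * ι (e*c'))) := by
        rw [mul_assoc (j u) (ι (e*(c*b')*e))]
    _ = ι (b*e) * ((ι (e*(c*b')*e) * j u) * (j u * ι (e*c'))) := by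
        rw [hswap (c*b')]
    _ = ι (b*e) * (ι (e*(c*b')*e) * ((j u * j u) * ι (e*c'))) := by
        simp only [mul_assoc]
    _ = ι (b*e) * (ι (e*(c*b')*e) * ((j u * ι (μ w)) * ι (e*c'))) := by
        rw [hjw]
    _ = ι (b*e) * (ι (e*(c*b')*e) * (j u * (ι (μ w) * ι (e*c')))) := by
        simp only [mul_assoc]
    _ = ι (b*e) * (ι (e*(c*b')*e) * (j u * ι (e*(μ w * c')))) := by
        rw [← map_mul, f4]
    _ = ι ((b*e*c*b')*e) * (j u * ι (e*(μ w * c'))) := by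
        rw [f2, map_mul ι (b*e) (e*(c*b')*e),
          mul_assoc (ι (b*e)) (ι (e*(c*b')*e)) (j u * ι (e*(μ w * c')))]


end Paper
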